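/- Liouville theorem for the flat-target Dirac-harmonic map system on Euclidean space: let n ≥ 3, let φ : ℝⁿ → ℝᵐ be smooth with Δφ = 0 and ψ : ℝⁿ → (ℂᴺ)ᵐ smooth with Dψ = 0. If ∫_{ℝⁿ} ( |dφ|² + |∇ψ|^{4/3} + |ψ|⁴ ) dx < ∞, where |dφ|² := ∑ᵢ|∂ᵢφ|² and |∇ψ|² := ∑ᵢ|∂ᵢψ|², then φ is constant. -/

import Mathlib

open Matrix MeasureTheory

noncomputable section

/-- Partial derivative of `f` in the `i`-th coordinate direction at `x`. -/
def epd {n : ℕ} {E : Type*} [NormedAddCommGroup E] [NormedSpace ℝ E]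
    (f : EuclideanSpace ℝ (Fin n) → E) (i : Fin n) (x : EuclideanSpace ℝ (Fin n)) : E :=
  fderiv ℝ f x (EuclideanSpace.single i 1)

/-- Real part of the standard Hermitian inner product on `ℂᴺ`. -/
def rinner {N : ℕ} (a b : Fin N → ℂ) : ℝ := (∑ k, star (a k) * b k).re

/-- Real part of the Hermitian inner product on `(ℂᴺ)ᵐ`, summed over the `m` components. -/
def rinnerV {m N : ℕ} (a b : Fin m → Fin N → ℂ) : ℝ := ∑ α, rinner (a α) (b α)

/-- Squared Hermitian norm on `(ℂᴺ)ᵐ`. -/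
def nsqV {m N : ℕ} (a : Fin m → Fin N → ℂ) : ℝ := rinnerV a a

/-- The matrices `γᵢ` are skew-Hermitian and satisfy the Clifford relations
`γᵢγⱼ + γⱼγᵢ = -2 δᵢⱼ Id`. -/
def IsCliffordFamily {n N : ℕ} (γ : Fin n → Matrix (Fin N) (Fin N) ℂ) : Prop :=
  (∀ i, (γ i)ᴴ = -(γ i)) ∧
  (∀ i j, γ i * γ j + γ j * γ i =
    if i = j then -(2 : ℂ) • (1 : Matrix (Fin N) (Fin N) ℂ) else 0)

/-- The Euclidean Dirac operator acting diagonally on vector spinors `ψ : ℝⁿ → (ℂᴺ)ᵐ`. -/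
def DiracV {n N m : ℕ} (γ : Fin n → Matrix (Fin N) (Fin N) ℂ)
    (ψ : EuclideanSpace ℝ (Fin n) → (Fin m → Fin N → ℂ))
    (x : EuclideanSpace ℝ (Fin n)) : Fin m → Fin N → ℂ :=
  fun α => ∑ i, (γ i).mulVec (epd ψ i x α)

/-- The Euclidean inner product `⟨∂ᵢφ, ∂ⱼφ⟩` of partial derivatives of a map
`φ : ℝⁿ → ℝᵐ`. -/
def dphiInner {n m : ℕ} (φ : EuclideanSpace ℝ (Fin n) → (Fin m → ℝ)) (i j : Fin n)
    (x : EuclideanSpace ℝ (Fin n)) : ℝ :=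
  ∑ a, epd φ i x a * epd φ j x a

/-- `φ` is harmonic: `Δφ = 0` componentwise. -/
def IsHarmonic {n m : ℕ} (φ : EuclideanSpace ℝ (Fin n) → (Fin m → ℝ)) : Prop :=
  ∀ x, ∑ i, epd (epd φ i) i x = 0


section helpers

variable {n : ℕ} {F G : Type*} [NormedAddCommGroup F] [NormedSpace ℝ F]
  [NormedAddCommGroup G] [NormedSpace ℝ G]

lemma epd_clm (L : F →L[ℝ] G) {f : EuclideanSpace ℝ (Fin n) → F} {x : EuclideanSpace ℝ (Fin n)}
    (hf : DifferentiableAt ℝ f x) (i : Fin n) :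
    epd (fun y => L (f y)) i x = L (epd f i x) := by
  unfold epd
  rw [show (fun y => L (f y)) = (⇑L ∘ f) from rfl,
    (L.hasFDerivAt.comp x hf.hasFDerivAt).fderiv]
  rfl

lemma epd_contDiff {f : EuclideanSpace ℝ (Fin n) → F} (hf : ContDiff ℝ (⊤ : ℕ∞) f) (i : Fin n) :
    ContDiff ℝ (⊤ : ℕ∞) (epd f i) := by
  have h := hf.fderiv_right (m := (⊤ : ℕ∞)) (by exact_mod_cast le_rfl)
  exact h.clm_apply contDiff_const

lemma epd_comm {f : EuclideanSpace ℝ (Fin n) → F} (hf : ContDiff ℝ (⊤ : ℕ∞) f)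
    (i j : Fin n) (x : EuclideanSpace ℝ (Fin n)) :
    epd (epd f i) j x = epd (epd f j) i x := by
  have hdf : Differentiable ℝ f := hf.differentiable (by simp)
  have hfd : ContDiff ℝ (⊤ : ℕ∞) (fderiv ℝ f) :=
    hf.fderiv_right (m := (⊤ : ℕ∞)) (by exact_mod_cast le_rfl)
  have hdf' : DifferentiableAt ℝ (fderiv ℝ f) x := (hfd.differentiable (by simp)) x
  have hsym := second_derivative_symmetric (f := f) (f' := fderiv ℝ f)
    (f'' := fderiv ℝ (fderiv ℝ f) x) (fun y => (hdf y).hasFDerivAt) hdf'.hasFDerivAt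
  have key : ∀ k l : Fin n, epd (epd f k) l x
      = fderiv ℝ (fderiv ℝ f) x (EuclideanSpace.single l 1) (EuclideanSpace.single k 1) := by
    intro k l
    have := epd_clm (ContinuousLinearMap.apply ℝ F (EuclideanSpace.single k 1))
      (f := fderiv ℝ f) hdf' l
    show fderiv ℝ (fun y => fderiv ℝ f y (EuclideanSpace.single k 1)) x
      (EuclideanSpace.single l 1) = _
    simpa [epd, ContinuousLinearMap.apply] using this
  rw [key i j, key j i, hsym]

lemma epd_sum {ι : Type*} (s : Finset ι) {f : ι → EuclideanSpace ℝ (Fin n) → F}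
    {x : EuclideanSpace ℝ (Fin n)} (hf : ∀ k ∈ s, DifferentiableAt ℝ (f k) x) (i : Fin n) :
    epd (fun y => ∑ k ∈ s, f k y) i x = ∑ k ∈ s, epd (f k) i x := by
  unfold epd
  rw [fderiv_fun_sum hf]
  simp

lemma clm_eq_zero_of_single {T : EuclideanSpace ℝ (Fin n) →L[ℝ] F}
    (h : ∀ j, T (EuclideanSpace.single j 1) = 0) : T = 0 := by
  apply ContinuousLinearMap.coe_injective
  apply Module.Basis.ext (EuclideanSpace.basisFun (Fin n) ℝ).toBasis
  intro j
  simpa [EuclideanSpace.basisFun_apply] using h j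

end helpers

section core

open Metric Filter

variable {n : ℕ}

set_option maxHeartbeats 1000000 in
lemma harmonic_L2_eq_zero (hn : 0 < n) {u : EuclideanSpace ℝ (Fin n) → ℝ}
    (hu : ContDiff ℝ (⊤ : ℕ∞) u)
    (hΔ : ∀ x, ∑ j, epd (epd u j) j x = 0)
    (hL2 : Integrable (fun x => u x ^ 2)) : ∀ x, u x = 0 := by
  have htop1 : ((⊤ : ℕ∞) : WithTop ℕ∞) ≠ 0 := by simp
  have hud : Differentiable ℝ u := hu.differentiable htop1
  have hucont : Continuous u := hu.continuous
  have hdu : ∀ j : Fin n, ContDiff ℝ (⊤ : ℕ∞) (epd u j) := fun j => epd_contDiff hu j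
  have hducont : ∀ j : Fin n, Continuous (epd u j) := fun j => (hdu j).continuous
  have hddcont : ∀ j : Fin n, Continuous (epd (epd u j) j) :=
    fun j => (epd_contDiff (hdu j) j).continuous
  have hIL2 : (0:ℝ) ≤ ∫ x, u x ^ 2 := integral_nonneg fun x => sq_nonneg _
  -- the bump function
  let c : ContDiffBump (0 : EuclideanSpace ℝ (Fin n)) := ⟨1, 2, one_pos, one_lt_two⟩
  have hχ : ContDiff ℝ (⊤ : ℕ∞) (c : EuclideanSpace ℝ (Fin n) → ℝ) := c.contDiff
  have hχc : HasCompactSupport (c : EuclideanSpace ℝ (Fin n) → ℝ) := c.hasCompactSupport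
  obtain ⟨C, hC⟩ := (HasCompactSupport.fderiv (𝕜 := ℝ) hχc).exists_bound_of_continuous
    (hχ.fderiv_right (m := (⊤ : ℕ∞)) (by exact_mod_cast le_rfl)).continuous
  have hC0 : 0 ≤ C := le_trans (norm_nonneg _) (hC 0)
  -- the Caccioppoli inequality
  have main : ∀ ρ R : ℝ, 1 ≤ R → ρ ≤ R → ∀ j : Fin n,
      (∫ x in closedBall (0 : EuclideanSpace ℝ (Fin n)) ρ, (epd u j x) ^ 2)
        ≤ 4 * n * (C / R) ^ 2 * ∫ x, u x ^ 2 := by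
    intro ρ R hR hρR j
    have hR0 : (0:ℝ) < R := lt_of_lt_of_le one_pos hR
    set η : EuclideanSpace ℝ (Fin n) → ℝ := fun x => c (R⁻¹ • x) with hη_def
    have hηs : ContDiff ℝ (⊤ : ℕ∞) η := hχ.comp (contDiff_const_smul R⁻¹)
    have hηd : Differentiable ℝ η := hηs.differentiable htop1
    have hηF : ∀ x, HasFDerivAt η (R⁻¹ • fderiv ℝ (⇑c) (R⁻¹ • x)) x := by
      intro x
      have h1 : HasFDerivAt (fun y : EuclideanSpace ℝ (Fin n) => R⁻¹ • y)
          (R⁻¹ • ContinuousLinearMap.id ℝ (EuclideanSpace ℝ (Fin n))) x := by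
        exact (hasFDerivAt_id x).const_smul R⁻¹
      have h2 : HasFDerivAt (⇑c) (fderiv ℝ (⇑c) (R⁻¹ • x)) (R⁻¹ • x) :=
        ((hχ.differentiable htop1) (R⁻¹ • x)).hasFDerivAt
      have h3 : HasFDerivAt η
          ((fderiv ℝ (⇑c) (R⁻¹ • x)).comp
            (R⁻¹ • ContinuousLinearMap.id ℝ (EuclideanSpace ℝ (Fin n)))) x := h2.comp x h1
      have he : (fderiv ℝ (⇑c) (R⁻¹ • x)).comp
            (R⁻¹ • ContinuousLinearMap.id ℝ (EuclideanSpace ℝ (Fin n)))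
          = R⁻¹ • fderiv ℝ (⇑c) (R⁻¹ • x) := by
        ext v
        simp
      rwa [he] at h3
    have hηd' : ∀ x, fderiv ℝ η x = R⁻¹ • fderiv ℝ (⇑c) (R⁻¹ • x) := fun x => (hηF x).fderiv
    have hηb1 : ∀ (x : EuclideanSpace ℝ (Fin n)) (k : Fin n), |epd η k x| ≤ C / R := by
      intro x k
      have h1 : ‖fderiv ℝ η x (EuclideanSpace.single k (1:ℝ))‖
          ≤ ‖fderiv ℝ η x‖ * ‖EuclideanSpace.single k (1:ℝ)‖ := (fderiv ℝ η x).le_opNorm _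
      have h2 : ‖fderiv ℝ η x‖ ≤ R⁻¹ * C := by
        rw [hηd' x, norm_smul]
        simp only [norm_inv, Real.norm_eq_abs, abs_of_pos hR0]
        exact mul_le_mul_of_nonneg_left (hC _) (by positivity)
      have h3 : ‖EuclideanSpace.single k (1:ℝ)‖ = 1 := by
        rw [EuclideanSpace.norm_single]; norm_num
      rw [h3, mul_one] at h1
      calc |epd η k x| = ‖fderiv ℝ η x (EuclideanSpace.single k (1:ℝ))‖ := rfl
        _ ≤ R⁻¹ * C := le_trans h1 h2
        _ = C / R := by field_simp
    have hη1 : ∀ x ∈ closedBall (0 : EuclideanSpace ℝ (Fin n)) R, η x = 1 := by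
      intro x hx
      apply c.one_of_mem_closedBall
      simp only [Metric.mem_closedBall, dist_zero_right] at hx ⊢
      have e1 : ‖R⁻¹ • x‖ = R⁻¹ * ‖x‖ := by
        rw [norm_smul, Real.norm_eq_abs, abs_inv, abs_of_pos hR0]
      rw [e1]
      show R⁻¹ * ‖x‖ ≤ (1:ℝ)
      calc R⁻¹ * ‖x‖ ≤ R⁻¹ * R := by
            exact mul_le_mul_of_nonneg_left hx (by positivity)
        _ = 1 := by field_simp
    have hη0 : ∀ x, x ∉ closedBall (0 : EuclideanSpace ℝ (Fin n)) (2*R) → η x = 0 := by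
      intro x hx
      apply c.zero_of_le_dist
      simp only [Metric.mem_closedBall, dist_zero_right, not_le] at hx
      rw [dist_zero_right]
      have e1 : ‖R⁻¹ • x‖ = R⁻¹ * ‖x‖ := by
        rw [norm_smul, Real.norm_eq_abs, abs_inv, abs_of_pos hR0]
      rw [e1]
      show (2:ℝ) ≤ R⁻¹ * ‖x‖
      calc (2:ℝ) = R⁻¹ * (2*R) := by field_simp
        _ ≤ R⁻¹ * ‖x‖ := mul_le_mul_of_nonneg_left hx.le (by positivity)
    have hηcs : HasCompactSupport η :=
      HasCompactSupport.intro (isCompact_closedBall _ _) hη0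
    have hout : ∀ x, x ∉ tsupport η → η x = 0 := fun x hx => image_eq_zero_of_notMem_tsupport hx
    have hout' : ∀ (x : EuclideanSpace ℝ (Fin n)) (k : Fin n), x ∉ tsupport η → epd η k x = 0 := by
      intro x k hx
      have h1 : x ∉ Function.support (fderiv ℝ η) := fun h => hx (support_fderiv_subset ℝ h)
      have h2 : fderiv ℝ η x = 0 := Function.notMem_support.mp h1
      simp [epd, h2]
    have hint : ∀ g : EuclideanSpace ℝ (Fin n) → ℝ, Continuous g →
        (∀ x, x ∉ tsupport η → g x = 0) → Integrable g := by
      intro g hg h0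
      exact hg.integrable_of_hasCompactSupport (HasCompactSupport.intro hηcs h0)
    have hIa : ∀ k : Fin n, Integrable (fun x => 2 * η x * epd η k x * u x * epd u k x) := by
      intro k
      refine hint _ ?_ ?_
      · exact (((continuous_const.mul hηs.continuous).mul
          (epd_contDiff hηs k).continuous).mul hucont).mul (hducont k)
      · intro x hx; simp [hout x hx]
    have hIb : ∀ k : Fin n, Integrable (fun x => η x ^ 2 * (epd u k x) ^ 2) := by
      intro k
      refine hint _ ((hηs.continuous.pow 2).mul ((hducont k).pow 2)) ?_
      intro x hx; simp [hout x hx]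
    have hIf : ∀ k : Fin n, Integrable (fun x => (η x ^ 2 * u x) * epd (epd u k) k x) := by
      intro k
      refine hint _ (((hηs.continuous.pow 2).mul hucont).mul (hddcont k)) ?_
      intro x hx; simp [hout x hx]
    have hIc : ∀ k : Fin n, Integrable (fun x => (η x ^ 2 * u x) * epd u k x) := by
      intro k
      refine hint _ (((hηs.continuous.pow 2).mul hucont).mul (hducont k)) ?_
      intro x hx; simp [hout x hx]
    have hIa' : ∀ k : Fin n, Integrable
        (fun x => -(2 * η x * epd η k x * u x * epd u k x)) volume := fun k => (hIa k).neg
    have hfdiff : Differentiable ℝ (fun x => η x ^ 2 * u x) := (hηd.pow 2).mul hud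
    have hf' : ∀ (k : Fin n) x, fderiv ℝ (fun y => η y ^ 2 * u y) x (EuclideanSpace.single k 1)
        = 2 * η x * epd η k x * u x + η x ^ 2 * epd u k x := by
      intro k x
      have h1 : HasFDerivAt (fun y => η y ^ 2) (η x • fderiv ℝ η x + η x • fderiv ℝ η x) x := by
        simpa only [pow_two, Pi.mul_def] using (hηd x).hasFDerivAt.mul (hηd x).hasFDerivAt
      have h2 := h1.mul (hud x).hasFDerivAt
      rw [show (fun y => η y ^ 2 * u y) = (fun y => η y ^ 2) * u from rfl, h2.fderiv]
      simp only [ContinuousLinearMap.add_apply, ContinuousLinearMap.coe_smul', Pi.smul_apply,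
        smul_eq_mul, epd]
      ring
    have ibp : ∀ k : Fin n,
        ∫ x, (η x ^ 2 * u x) * epd (epd u k) k x
          = - ∫ x, (2 * η x * epd η k x * u x + η x ^ 2 * epd u k x) * epd u k x := by
      intro k
      have e1 : (fun x => fderiv ℝ (fun y => η y ^ 2 * u y) x (EuclideanSpace.single k 1)
            * epd u k x)
          = fun x => (2 * η x * epd η k x * u x + η x ^ 2 * epd u k x) * epd u k x :=
        funext fun x => by rw [hf' k x]
      have hInt1 : Integrable (fun x => fderiv ℝ (fun y => η y ^ 2 * u y) x
          (EuclideanSpace.single k 1) * epd u k x) := by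
        rw [e1]
        refine hint _ ?_ ?_
        · refine (Continuous.add ?_ ?_).mul (hducont k)
          · exact ((continuous_const.mul hηs.continuous).mul
              (epd_contDiff hηs k).continuous).mul hucont
          · exact (hηs.continuous.pow 2).mul (hducont k)
        · intro x hx; simp [hout x hx]
      have h := integral_mul_fderiv_eq_neg_fderiv_mul_of_integrable (μ := volume)
        (f := fun x => η x ^ 2 * u x) (g := epd u k) (v := EuclideanSpace.single k 1)
        hInt1 (hIf k) (hIc k) (fun x _ => hfdiff x) (fun x _ => (hdu k).differentiable htop1 x)
      rw [e1] at h
      exact h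
    have key : ∀ k : Fin n, ∫ x, η x ^ 2 * (epd u k x) ^ 2
        = - (∫ x, (η x ^ 2 * u x) * epd (epd u k) k x)
          - ∫ x, 2 * η x * epd η k x * u x * epd u k x := by
      intro k
      have h := ibp k
      have hsplit : ∫ x, (2 * η x * epd η k x * u x + η x ^ 2 * epd u k x) * epd u k x
          = (∫ x, 2 * η x * epd η k x * u x * epd u k x)
            + ∫ x, η x ^ 2 * (epd u k x) ^ 2 := by
        rw [← integral_add (hIa k) (hIb k)]
        congr 1
        funext x
        ring
      rw [hsplit] at h
      linarith
    have hsum0 : ∑ k : Fin n, ∫ x, (η x ^ 2 * u x) * epd (epd u k) k x = 0 := by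
      rw [← integral_finset_sum _ (fun k _ => hIf k)]
      have e : (fun x => ∑ k : Fin n, (η x ^ 2 * u x) * epd (epd u k) k x)
          = fun _ => (0:ℝ) := by
        funext x
        rw [← Finset.mul_sum, hΔ x, mul_zero]
      rw [e, integral_zero]
    have total2 : ∫ x, ∑ k : Fin n, η x ^ 2 * (epd u k x) ^ 2
        = ∫ x, ∑ k : Fin n, -(2 * η x * epd η k x * u x * epd u k x) := by
      rw [integral_finset_sum _ (fun k _ => hIb k),
        integral_finset_sum _ (fun k _ => hIa' k),
        Finset.sum_congr rfl fun k _ => key k]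
      simp only [integral_neg, Finset.sum_sub_distrib, Finset.sum_neg_distrib, hsum0, neg_zero,
        zero_sub]
    have hpt : ∀ x, ∑ k : Fin n, -(2 * η x * epd η k x * u x * epd u k x)
        ≤ (1/2) * (∑ k : Fin n, η x ^ 2 * (epd u k x) ^ 2) + 2 * n * (C/R)^2 * u x ^ 2 := by
      intro x
      have e2 : 2 * (n:ℝ) * (C/R)^2 * u x ^ 2 = ∑ _k : Fin n, 2 * (C/R)^2 * u x ^ 2 := by
        rw [Finset.sum_const, Finset.card_univ, Fintype.card_fin, nsmul_eq_mul]
        ring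
      rw [e2, Finset.mul_sum, ← Finset.sum_add_distrib]
      apply Finset.sum_le_sum
      intro k _
      have h1 : |epd η k x| ≤ C / R := hηb1 x k
      have h2 : epd η k x * epd η k x ≤ (C/R)^2 := by
        have h3 := mul_self_le_mul_self (abs_nonneg (epd η k x)) h1
        rw [abs_mul_abs_self] at h3
        calc epd η k x * epd η k x ≤ C/R * (C/R) := h3
          _ = (C/R)^2 := (sq (C/R)).symm
      nlinarith [sq_nonneg (η x * epd u k x + 2 * epd η k x * u x), sq_nonneg (u x)]
    have hIneg : Integrable (fun x => ∑ k : Fin n, -(2 * η x * epd η k x * u x * epd u k x)) :=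
      integrable_finset_sum _ fun k _ => hIa' k
    have hIrhs : Integrable (fun x => (1/2) * (∑ k : Fin n, η x ^ 2 * (epd u k x) ^ 2)
        + 2 * n * (C/R)^2 * u x ^ 2) :=
      ((integrable_finset_sum _ fun k _ => hIb k).const_mul _).add (hL2.const_mul _)
    have hle : ∫ x, ∑ k : Fin n, η x ^ 2 * (epd u k x) ^ 2
        ≤ (1/2) * (∫ x, ∑ k : Fin n, η x ^ 2 * (epd u k x) ^ 2)
          + 2 * n * (C/R)^2 * ∫ x, u x ^ 2 := by
      calc ∫ x, ∑ k : Fin n, η x ^ 2 * (epd u k x) ^ 2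
          = ∫ x, ∑ k : Fin n, -(2 * η x * epd η k x * u x * epd u k x) := total2
        _ ≤ ∫ x, ((1/2) * (∑ k : Fin n, η x ^ 2 * (epd u k x) ^ 2)
            + 2 * n * (C/R)^2 * u x ^ 2) := integral_mono hIneg hIrhs hpt
        _ = (1/2) * (∫ x, ∑ k : Fin n, η x ^ 2 * (epd u k x) ^ 2)
            + 2 * n * (C/R)^2 * ∫ x, u x ^ 2 := by
          rw [integral_add ((integrable_finset_sum _ fun k _ => hIb k).const_mul _)
            (hL2.const_mul _), integral_const_mul, integral_const_mul]
    have hSb : ∫ x, ∑ k : Fin n, η x ^ 2 * (epd u k x) ^ 2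
        ≤ 4 * n * (C/R)^2 * ∫ x, u x ^ 2 := by linarith
    have hstep1 : ∫ x in closedBall (0 : EuclideanSpace ℝ (Fin n)) ρ, (epd u j x) ^ 2
        = ∫ x in closedBall (0 : EuclideanSpace ℝ (Fin n)) ρ, η x ^ 2 * (epd u j x) ^ 2 := by
      apply MeasureTheory.setIntegral_congr_fun measurableSet_closedBall
      intro x hx
      show (epd u j x) ^ 2 = η x ^ 2 * (epd u j x) ^ 2
      rw [hη1 x (closedBall_subset_closedBall hρR hx), one_pow, one_mul]
    have hstep2 : ∫ x in closedBall (0 : EuclideanSpace ℝ (Fin n)) ρ, η x ^ 2 * (epd u j x) ^ 2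
        ≤ ∫ x in closedBall (0 : EuclideanSpace ℝ (Fin n)) ρ,
            ∑ k : Fin n, η x ^ 2 * (epd u k x) ^ 2 := by
      apply MeasureTheory.setIntegral_mono_on ((hIb j).integrableOn)
        ((integrable_finset_sum _ fun k _ => hIb k).integrableOn) measurableSet_closedBall
      intro x _
      exact Finset.single_le_sum (f := fun k => η x ^ 2 * (epd u k x) ^ 2)
        (fun k _ => by positivity) (Finset.mem_univ j)
    have hstep3 : ∫ x in closedBall (0 : EuclideanSpace ℝ (Fin n)) ρ,
          ∑ k : Fin n, η x ^ 2 * (epd u k x) ^ 2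
        ≤ ∫ x, ∑ k : Fin n, η x ^ 2 * (epd u k x) ^ 2 :=
      setIntegral_le_integral (integrable_finset_sum _ fun k _ => hIb k)
        (Filter.Eventually.of_forall fun x => by positivity)
    calc ∫ x in closedBall (0 : EuclideanSpace ℝ (Fin n)) ρ, (epd u j x) ^ 2
        = ∫ x in closedBall (0 : EuclideanSpace ℝ (Fin n)) ρ, η x ^ 2 * (epd u j x) ^ 2 := hstep1
      _ ≤ ∫ x in closedBall (0 : EuclideanSpace ℝ (Fin n)) ρ,
            ∑ k : Fin n, η x ^ 2 * (epd u k x) ^ 2 := hstep2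
      _ ≤ ∫ x, ∑ k : Fin n, η x ^ 2 * (epd u k x) ^ 2 := hstep3
      _ ≤ 4 * n * (C/R)^2 * ∫ x, u x ^ 2 := hSb
  -- conclude the gradient vanishes
  have grad0 : ∀ (j : Fin n) (x₀ : EuclideanSpace ℝ (Fin n)), epd u j x₀ = 0 := by
    intro j x₀
    set ρ : ℝ := ‖x₀‖ + 1 with hρdef
    have hI0 : ∫ x in closedBall (0 : EuclideanSpace ℝ (Fin n)) ρ, (epd u j x) ^ 2 = 0 := by
      have hnon : 0 ≤ ∫ x in closedBall (0 : EuclideanSpace ℝ (Fin n)) ρ, (epd u j x) ^ 2 :=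
        MeasureTheory.setIntegral_nonneg measurableSet_closedBall fun x _ => sq_nonneg _
      have hub : ∀ R : ℝ, max ρ 1 ≤ R →
          (∫ x in closedBall (0 : EuclideanSpace ℝ (Fin n)) ρ, (epd u j x) ^ 2)
            ≤ 4 * n * C^2 * (∫ x, u x ^ 2) / R^2 := by
        intro R hR
        have h := main ρ R (le_trans (le_max_right _ _) hR) (le_trans (le_max_left _ _) hR) j
        have e : 4 * (n:ℝ) * (C/R)^2 * ∫ x, u x ^ 2 = 4 * n * C^2 * (∫ x, u x ^ 2) / R^2 := by
          rw [div_pow]; ring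
        rwa [e] at h
      have htend : Tendsto (fun R : ℝ => 4 * n * C^2 * (∫ x, u x ^ 2) / R^2)
          atTop (nhds 0) :=
        Tendsto.div_atTop tendsto_const_nhds (tendsto_pow_atTop (two_ne_zero))
      have hle0 := ge_of_tendsto htend (Filter.eventually_atTop.2 ⟨max ρ 1, hub⟩)
      exact le_antisymm hle0 hnon
    have hIntOn : MeasureTheory.IntegrableOn (fun x => (epd u j x) ^ 2)
        (closedBall (0 : EuclideanSpace ℝ (Fin n)) ρ) volume :=
      (((hducont j).pow 2).continuousOn).integrableOn_compact (isCompact_closedBall _ _)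
    have hae := (MeasureTheory.integral_eq_zero_iff_of_nonneg
      (fun x => sq_nonneg (epd u j x)) hIntOn).mp hI0
    by_contra hne
    have hopen : IsOpen {x : EuclideanSpace ℝ (Fin n) | epd u j x ≠ 0} :=
      isOpen_compl_singleton.preimage (hducont j)
    have hmem : x₀ ∈ ball (0 : EuclideanSpace ℝ (Fin n)) ρ
        ∩ {x | epd u j x ≠ 0} := by
      constructor
      · simp only [Metric.mem_ball, dist_zero_right, hρdef]
        linarith
      · exact hne
    have hms : MeasurableSet {x : EuclideanSpace ℝ (Fin n) | ¬ (epd u j x) ^ 2 = 0} :=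
      (((hducont j).pow 2).measurable (measurableSet_singleton 0).compl)
    have h1 : volume ({x : EuclideanSpace ℝ (Fin n) | ¬ (epd u j x) ^ 2 = 0}
        ∩ closedBall 0 ρ) = 0 := by
      have h2 : ∀ᵐ x ∂(volume.restrict (closedBall (0 : EuclideanSpace ℝ (Fin n)) ρ)),
          (epd u j x) ^ 2 = 0 := hae
      rw [MeasureTheory.ae_iff, MeasureTheory.Measure.restrict_apply hms] at h2
      simpa using h2
    have hzero : volume (ball (0 : EuclideanSpace ℝ (Fin n)) ρ ∩ {x | epd u j x ≠ 0}) = 0 := by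
      apply MeasureTheory.measure_mono_null ?_ h1
      intro x hx
      exact ⟨pow_ne_zero 2 hx.2, ball_subset_closedBall hx.1⟩
    have hpos := (Metric.isOpen_ball.inter hopen).measure_pos volume ⟨x₀, hmem⟩
    exact absurd hzero hpos.ne'
  have hconst : ∀ x y, u x = u y := by
    apply is_const_of_fderiv_eq_zero hud
    intro x
    exact clm_eq_zero_of_single fun j => grad0 j x
  intro x
  have h0 : u 0 = 0 := by
    have heq : (fun x : EuclideanSpace ℝ (Fin n) => u x ^ 2) = fun _ => u 0 ^ 2 :=
      funext fun y => by rw [hconst y 0]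
    rw [heq] at hL2
    haveI : Nontrivial (EuclideanSpace ℝ (Fin n)) := by
      refine ⟨⟨EuclideanSpace.single ⟨0, hn⟩ (1:ℝ), 0, fun h => ?_⟩⟩
      have h2 := congrArg norm h
      rw [EuclideanSpace.norm_single, norm_zero, norm_one] at h2
      exact one_ne_zero h2
    rcases MeasureTheory.integrable_const_iff.mp hL2 with h | h
    · exact pow_eq_zero_iff two_ne_zero |>.mp h
    · exfalso
      haveI := h
      exact MeasureTheory.measure_ne_top (volume : Measure (EuclideanSpace ℝ (Fin n))) Set.univ
        (MeasureTheory.measure_univ_of_isAddLeftInvariant volume)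
  rw [hconst x 0, h0]

end core

section assembly

lemma rinner_self_nonneg {N : ℕ} (a : Fin N → ℂ) : 0 ≤ rinner a a := by
  unfold rinner
  rw [Complex.re_sum]
  apply Finset.sum_nonneg
  intro k _
  rw [Complex.star_def, mul_comm, Complex.mul_conj]
  simpa using Complex.normSq_nonneg (a k)

lemma nsqV_nonneg {m N : ℕ} (a : Fin m → Fin N → ℂ) : 0 ≤ nsqV a := by
  unfold nsqV rinnerV
  exact Finset.sum_nonneg fun α _ => rinner_self_nonneg _

set_option maxHeartbeats 1000000 in
theorem dh_liouville {n N m : ℕ} (hn : 3 ≤ n) (hN : 1 ≤ N) (hm : 1 ≤ m)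
    (γ : Fin n → Matrix (Fin N) (Fin N) ℂ) (hγ : IsCliffordFamily γ)
    (φ : EuclideanSpace ℝ (Fin n) → (Fin m → ℝ)) (hφ : ContDiff ℝ (⊤ : ℕ∞) φ)
    (ψ : EuclideanSpace ℝ (Fin n) → (Fin m → Fin N → ℂ)) (hψ : ContDiff ℝ (⊤ : ℕ∞) ψ)
    (hharm : IsHarmonic φ) (hdirac : ∀ x, DiracV γ ψ x = 0)
    (hfin : Integrable (fun x : EuclideanSpace ℝ (Fin n) =>
      (∑ i', dphiInner φ i' i' x)
        + (∑ i, nsqV (epd ψ i x)) ^ ((2 : ℝ) / 3)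
        + (nsqV (ψ x)) ^ 2) volume) :
    ∀ x y, φ x = φ y := by
  have hn0 : 0 < n := by omega
  have htop1 : ((⊤ : ℕ∞) : WithTop ℕ∞) ≠ 0 := by simp
  have hφd : Differentiable ℝ φ := hφ.differentiable htop1
  have hw : ∀ a : Fin m, ContDiff ℝ (⊤ : ℕ∞) (fun x => φ x a) := fun a =>
    (ContinuousLinearMap.proj a : (Fin m → ℝ) →L[ℝ] ℝ).contDiff.comp hφ
  have hepd_w : ∀ (a : Fin m) (i : Fin n) x, epd (fun y => φ y a) i x = epd φ i x a := by
    intro a i x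
    have h := epd_clm (ContinuousLinearMap.proj a : (Fin m → ℝ) →L[ℝ] ℝ) (hφd x) i
    simpa using h
  have hw_harm : ∀ (a : Fin m) x, ∑ j, epd (epd (fun y => φ y a) j) j x = 0 := by
    intro a x
    have h1 : ∀ j : Fin n, epd (epd (fun y => φ y a) j) j x = epd (epd φ j) j x a := by
      intro j
      have hfd : DifferentiableAt ℝ (epd φ j) x :=
        ((epd_contDiff hφ j).differentiable htop1) x
      have h2 := epd_clm (ContinuousLinearMap.proj a : (Fin m → ℝ) →L[ℝ] ℝ) hfd j
      have h3 : (fun y => (ContinuousLinearMap.proj a : (Fin m → ℝ) →L[ℝ] ℝ) (epd φ j y))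
          = epd (fun y => φ y a) j := by
        funext y
        simpa using (hepd_w a j y).symm
      rw [h3] at h2
      simpa using h2
    rw [Finset.sum_congr rfl fun j _ => h1 j, ← Finset.sum_apply, hharm x]
    rfl
  have grad0 : ∀ (a : Fin m) (i : Fin n) (x : EuclideanSpace ℝ (Fin n)),
      epd (fun y => φ y a) i x = 0 := by
    intro a i
    apply harmonic_L2_eq_zero hn0 (epd_contDiff (hw a) i)
    · intro x
      have h1 : ∀ j : Fin n, epd (epd (epd (fun y => φ y a) i) j) j x
          = epd (epd (epd (fun y => φ y a) j) j) i x := by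
        intro j
        have e1 : epd (epd (fun y => φ y a) i) j
            = fun y => epd (epd (fun y' => φ y' a) j) i y :=
          funext fun y => epd_comm (hw a) i j y
        rw [e1]
        exact epd_comm (epd_contDiff (hw a) j) i j x
      rw [Finset.sum_congr rfl fun j _ => h1 j]
      have h5 := epd_sum (Finset.univ : Finset (Fin n))
        (f := fun j => epd (epd (fun y' => φ y' a) j) j) (x := x)
        (fun k _ => ((epd_contDiff (epd_contDiff (hw a) k) k).differentiable htop1) x) i
      rw [← h5]
      have h6 : (fun y => ∑ j : Fin n, epd (epd (fun y' => φ y' a) j) j y)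
          = fun _ => (0 : ℝ) := funext fun y => hw_harm a y
      rw [h6]
      simp [epd]
    · have hcont : Continuous fun x => (epd (fun y => φ y a) i x) ^ 2 :=
        ((epd_contDiff (hw a) i).continuous).pow 2
      apply MeasureTheory.Integrable.mono' hfin hcont.aestronglyMeasurable
      apply Filter.Eventually.of_forall
      intro x
      rw [Real.norm_eq_abs, abs_of_nonneg (sq_nonneg _)]
      have hA : (epd (fun y => φ y a) i x) ^ 2 ≤ ∑ i', dphiInner φ i' i' x := by
        rw [hepd_w a i x]
        have h7 : epd φ i x a * epd φ i x a ≤ dphiInner φ i i x := by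
          unfold dphiInner
          exact Finset.single_le_sum (f := fun a' => epd φ i x a' * epd φ i x a')
            (fun a' _ => mul_self_nonneg _) (Finset.mem_univ a)
        have h8 : dphiInner φ i i x ≤ ∑ i', dphiInner φ i' i' x :=
          Finset.single_le_sum (f := fun i' => dphiInner φ i' i' x)
            (fun i' _ => Finset.sum_nonneg fun a' _ => mul_self_nonneg _) (Finset.mem_univ i)
        rw [sq]
        exact le_trans h7 h8
      have hB : (0:ℝ) ≤ (∑ i', nsqV (epd ψ i' x)) ^ ((2:ℝ)/3) :=
        Real.rpow_nonneg (Finset.sum_nonneg fun i' _ => nsqV_nonneg _) _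
      have hC : (0:ℝ) ≤ (nsqV (ψ x)) ^ 2 := sq_nonneg _
      linarith
  intro x y
  funext a
  exact is_const_of_fderiv_eq_zero ((hw a).differentiable htop1)
    (fun z => clm_eq_zero_of_single fun j => grad0 a j z) x y

end assembly
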